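/- Fix a < b. Then r · G_{a<z<b} → a − b as r → ∞, uniformly in the polar angle; that is, writing ρ = r sin θ, z = r cos θ with θ ∈ (0,π), the function r · log[(√(ρ²+(z-b)²)+(z-b))/(√(ρ²+(z-a)²)+(z-a))] tends to a − b as r → ∞. Consequently G_{a<z<b} = (a-b)/r + O(r⁻²) at infinity. -/

import Mathlib

open Real Filter Set Topology

lemma aux_pos (ρ w : ℝ) (hρ : ρ ≠ 0) : 0 < Real.sqrt (ρ^2 + w^2) + w := by
  have h1 : |w| < Real.sqrt (ρ^2 + w^2) := by
    rw [← Real.sqrt_sq_eq_abs]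
    exact Real.sqrt_lt_sqrt (sq_nonneg w) (by nlinarith [sq_pos_of_ne_zero hρ])
  have h2 := neg_abs_le w
  linarith

lemma hasDerivF (ρ z : ℝ) (hρ : ρ ≠ 0) (c : ℝ) :
    HasDerivAt (fun c => Real.log (Real.sqrt (ρ^2 + (z - c)^2) + (z - c)))
      (-1 / Real.sqrt (ρ^2 + (z - c)^2)) c := by
  have hXpos : 0 < ρ^2 + (z - c)^2 := by nlinarith [sq_pos_of_ne_zero hρ, sq_nonneg (z - c)]
  have hspos : 0 < Real.sqrt (ρ^2 + (z - c)^2) := Real.sqrt_pos.mpr hXpos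
  have hPpos : 0 < Real.sqrt (ρ^2 + (z - c)^2) + (z - c) := aux_pos ρ (z - c) hρ
  have h0 : HasDerivAt (fun c : ℝ => z - c) (-1) c := by
    simpa using (hasDerivAt_id c).const_sub z
  have hsq := (h0.pow 2).const_add (ρ^2)
  have hsqrt := hsq.sqrt (ne_of_gt hXpos)
  have hsum := hsqrt.add h0
  have hlog := hsum.log (ne_of_gt hPpos)
  convert hlog using 1
  · rfl
  have hs : Real.sqrt (ρ^2 + (z - c)^2) ≠ 0 := ne_of_gt hspos
  have hP' : Real.sqrt (ρ^2 + (z - c)^2) + (z - c) ≠ 0 := ne_of_gt hPpos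
  simp only [Pi.add_apply, Pi.pow_apply]
  norm_num
  field_simp
  ring

set_option maxHeartbeats 1000000 in
theorem greens_function_decay_at_infinity (a b : ℝ) (hab : a < b) :
    ∀ ε : ℝ, 0 < ε → ∃ R : ℝ, ∀ r : ℝ, R ≤ r → ∀ θ : ℝ, θ ∈ Ioo 0 π →
      |r * Real.log
          ((Real.sqrt ((r * Real.sin θ) ^ 2 + (r * Real.cos θ - b) ^ 2) +
              (r * Real.cos θ - b)) /
            (Real.sqrt ((r * Real.sin θ) ^ 2 + (r * Real.cos θ - a) ^ 2) +
              (r * Real.cos θ - a))) - (a - b)| < ε := by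
  intro ε hε
  have hba : 0 < b - a := sub_pos.mpr hab
  set M : ℝ := max |a| |b| + 1 with hMdef
  have hM1 : 1 ≤ M := by
    have h := le_max_of_le_left (α := ℝ) (c := |b|) (abs_nonneg a)
    linarith
  have hMa : |a| ≤ M := by have := le_max_left |a| |b|; linarith
  have hMb : |b| ≤ M := by have := le_max_right |a| |b|; linarith
  refine ⟨6*M + 3*M*(b-a)/ε + 1, ?_⟩
  intro r hr θ hθ
  have hquot : 0 ≤ 3*M*(b-a)/ε := by
    apply div_nonneg _ hε.le
    have : (0:ℝ) ≤ 3*M := by linarith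
    nlinarith
  have hr6 : 6*M + 3*M*(b-a)/ε + 1 ≤ r := hr
  have hrpos : 0 < r := by linarith
  have hsin : 0 < Real.sin θ := Real.sin_pos_of_pos_of_lt_pi hθ.1 hθ.2
  set ρ : ℝ := r * Real.sin θ with hρdef
  set z : ℝ := r * Real.cos θ with hzdef
  have hρ : ρ ≠ 0 := ne_of_gt (mul_pos hrpos hsin)
  have hρz : ρ^2 + z^2 = r^2 := by
    have h := Real.sin_sq_add_cos_sq θ
    rw [hρdef, hzdef]; ring_nf; nlinarith [h]
  have hzr : |z| ≤ r := by
    rw [hzdef, abs_mul, abs_of_pos hrpos]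
    calc r * |Real.cos θ| ≤ r * 1 := by
          exact mul_le_mul_of_nonneg_left (Real.abs_cos_le_one θ) hrpos.le
      _ = r := mul_one r
  -- MVT
  set F : ℝ → ℝ := fun c => Real.log (Real.sqrt (ρ^2 + (z - c)^2) + (z - c)) with hFdef
  obtain ⟨ξ, hξ, hslope⟩ := exists_hasDerivAt_eq_slope F
      (fun c => -1 / Real.sqrt (ρ^2 + (z - c)^2)) hab
      (fun x _ => (hasDerivF ρ z hρ x).continuousAt.continuousWithinAt)
      (fun x _ => hasDerivF ρ z hρ x)
  set s : ℝ := Real.sqrt (ρ^2 + (z - ξ)^2) with hsdef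
  set X : ℝ := ρ^2 + (z - ξ)^2 with hXdef
  have hXpos : 0 < X := by nlinarith [sq_pos_of_ne_zero hρ, sq_nonneg (z - ξ)]
  have hs0 : 0 ≤ s := Real.sqrt_nonneg _
  have hssq : s^2 = X := Real.sq_sqrt hXpos.le
  have hξM : |ξ| ≤ M := by
    have h1 := neg_abs_le a
    have h2 := le_abs_self b
    rw [abs_le]; constructor <;> [linarith [hξ.1]; linarith [hξ.2]]
  have hξ1 : -M ≤ ξ := (abs_le.mp hξM).1
  have hξ2 : ξ ≤ M := (abs_le.mp hξM).2
  have hz1 : -r ≤ z := (abs_le.mp hzr).1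
  have hz2 : z ≤ r := (abs_le.mp hzr).2
  have hMr : M ≤ r := by linarith
  have hXlow : r^2 - 3*r*M ≤ X := by
    rw [hXdef]
    nlinarith [mul_nonneg (sub_nonneg.mpr hz2) (sub_nonneg.mpr hξ2),
      mul_nonneg (by linarith : (0:ℝ) ≤ r + z) (by linarith : (0:ℝ) ≤ M + ξ)]
  have hXhigh : X ≤ r^2 + 3*r*M := by
    rw [hXdef]
    nlinarith [mul_nonneg (sub_nonneg.mpr hz2) (by linarith : (0:ℝ) ≤ M + ξ),
      mul_nonneg (by linarith : (0:ℝ) ≤ r + z) (sub_nonneg.mpr hξ2)]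
  have hs1 : r - 3*M ≤ s := by nlinarith [hXlow, hssq, hs0, hMr, hM1]
  have hs2 : s ≤ r + 3*M := by nlinarith [hXhigh, hssq, hs0, hMr, hM1]
  have hspos : 0 < s := by linarith
  -- positivity of numerator and denominator
  have hP : 0 < Real.sqrt (ρ^2 + (z - b)^2) + (z - b) := aux_pos ρ (z - b) hρ
  have hQ : 0 < Real.sqrt (ρ^2 + (z - a)^2) + (z - a) := aux_pos ρ (z - a) hρ
  -- slope rearrangement
  rw [eq_div_iff (ne_of_gt hba)] at hslope
  have hval : r * Real.log
          ((Real.sqrt (ρ^2 + (z - b)^2) + (z - b)) /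
            (Real.sqrt (ρ^2 + (z - a)^2) + (z - a))) - (a - b)
      = (a - b) * (r - s) / s := by
    rw [Real.log_div (ne_of_gt hP) (ne_of_gt hQ)]
    have hFb : Real.log (Real.sqrt (ρ^2 + (z - b)^2) + (z - b)) = F b := rfl
    have hFa : Real.log (Real.sqrt (ρ^2 + (z - a)^2) + (z - a)) = F a := rfl
    rw [hFb, hFa, ← hslope]
    field_simp
    ring
  rw [hval, abs_div, abs_mul, abs_of_pos hspos, abs_of_neg (by linarith : a - b < 0)]
  rw [div_lt_iff₀ hspos]
  have habs : |r - s| ≤ 3*M := abs_le.mpr ⟨by linarith, by linarith⟩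
  have hkey : (b - a) * (3*M) < ε * (r - 3*M) := by
    have hdiv : ε * (3*M*(b-a)/ε) = 3*M*(b-a) := by field_simp
    nlinarith [mul_le_mul_of_nonneg_left (by linarith : 3*M + 3*M*(b-a)/ε + 1 ≤ r - 3*M) hε.le,
      mul_pos hε (by linarith : (0:ℝ) < 3*M)]
  calc -(a-b) * |r - s| ≤ (b - a) * (3*M) := by
        rw [show -(a-b) = b - a from by ring]
        exact mul_le_mul_of_nonneg_left habs (by linarith)
    _ < ε * (r - 3*M) := hkey
    _ ≤ ε * s := by nlinarith
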